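/- Let U₁, U₂ be n×n complex unitary matrices and let Φ be a unit vector in ℂⁿ ⊗ ℂᵐ (indexed by Fin n × Fin m). Then |⟨Φ, ((U₁†U₂) ⊗ I_m) Φ⟩| ≥ F(U₁, U₂), where (U₁†U₂) ⊗ I_m is the Kronecker product with the m×m identity matrix. In particular, the fidelity is not decreased by attaching an ancilla. -/

import Mathlib

open Matrix Kronecker

/-- The fidelity of two unitary matrices: the infimum of `|⟨ψ, U₁†U₂ ψ⟩|` over
unit vectors `ψ`. -/
noncomputable def unitaryFidelity (n : ℕ) (U₁ U₂ : Matrix (Fin n) (Fin n) ℂ) : ℝ :=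
  sInf { r : ℝ | ∃ ψ : Fin n → ℂ, star ψ ⬝ᵥ ψ = 1 ∧
    r = ‖star ψ ⬝ᵥ ((U₁ᴴ * U₂) *ᵥ ψ)‖ }

section Aux

open Module


set_option maxHeartbeats 1000000 in
theorem unitary_spectral (n : ℕ) (V : Matrix (Fin n) (Fin n) ℂ)
    (hV : V ∈ Matrix.unitaryGroup (Fin n) ℂ) :
    ∃ (W : Matrix (Fin n) (Fin n) ℂ) (d : Fin n → ℂ), W ∈ Matrix.unitaryGroup (Fin n) ℂ ∧
      V = W * Matrix.diagonal d * Wᴴ := by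
  classical
  have h1 : V * Vᴴ = 1 := by
    simpa [Matrix.star_eq_conjTranspose] using (Matrix.mem_unitaryGroup_iff).mp hV
  have h2 : Vᴴ * V = 1 := by
    simpa [Matrix.star_eq_conjTranspose] using (Matrix.mem_unitaryGroup_iff').mp hV
  have hcomm : V * Vᴴ = Vᴴ * V := by rw [h1, h2]
  set A : Matrix (Fin n) (Fin n) ℂ := ((1:ℂ)/2) • (V + Vᴴ) with hAdef
  set B : Matrix (Fin n) (Fin n) ℂ := (Complex.I/2) • (Vᴴ - V) with hBdef
  have hA : A.IsHermitian := by
    unfold A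
    rw [Matrix.IsHermitian, Matrix.conjTranspose_smul]
    simp [Matrix.conjTranspose_add, add_comm]
  have hB : B.IsHermitian := by
    unfold B
    rw [Matrix.IsHermitian, Matrix.conjTranspose_smul]
    simp only [Matrix.conjTranspose_sub, Matrix.conjTranspose_conjTranspose]
    have : star (Complex.I/2) = -(Complex.I/2) := by simp [neg_div]
    rw [this, neg_smul, ← smul_neg, neg_sub]
  have hVAB : V = A + Complex.I • B := by
    unfold A B
    rw [smul_smul]
    have : Complex.I * (Complex.I/2) = -(1/2) := by
      rw [← mul_div_assoc, Complex.I_mul_I]; norm_num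
    rw [this]
    module
  have hABcomm : A * B = B * A := by
    unfold A B
    rw [Matrix.smul_mul, Matrix.mul_smul, Matrix.smul_mul, Matrix.mul_smul, smul_smul, smul_smul]
    rw [mul_comm]
    congr 1
    simp only [add_mul, sub_mul, mul_add, mul_sub]
    rw [hcomm]
    abel
  -- linear map level
  have hSA : (Matrix.toEuclideanLin A).IsSymmetric := (Matrix.isHermitian_iff_isSymmetric).1 hA
  have hSB : (Matrix.toEuclideanLin B).IsSymmetric := (Matrix.isHermitian_iff_isSymmetric).1 hB
  have hmul : ∀ (M N : Matrix (Fin n) (Fin n) ℂ),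
      Matrix.toEuclideanLin (M * N) = (Matrix.toEuclideanLin M) ∘ₗ (Matrix.toEuclideanLin N) := by
    intro M N; ext x; simp [Matrix.toEuclideanLin_apply, Matrix.mulVec_mulVec]
  have hc : Commute (Matrix.toEuclideanLin A) (Matrix.toEuclideanLin B) := by
    unfold Commute SemiconjBy
    rw [Module.End.mul_eq_comp, Module.End.mul_eq_comp, ← hmul, ← hmul, hABcomm]
  have hInt := LinearMap.IsSymmetric.directSum_isInternal_of_commute hSA hSB hc
  have hOF0 := LinearMap.IsSymmetric.orthogonalFamily_eigenspace_inf_eigenspace hSA hSB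
  have hfin := Submodule.finite_ne_bot_of_iSupIndep hInt.submodule_iSupIndep
  haveI : Fintype { i : ℂ × ℂ // ¬ (Module.End.eigenspace (Matrix.toEuclideanLin A) i.2
      ⊓ Module.End.eigenspace (Matrix.toEuclideanLin B) i.1) = ⊥ } := hfin.fintype
  have hInt' := (DirectSum.isInternal_ne_bot_iff).2 hInt
  have hOF := hOF0.comp (Subtype.val_injective (p := fun i : ℂ × ℂ =>
    ¬ (Module.End.eigenspace (Matrix.toEuclideanLin A) i.2
      ⊓ Module.End.eigenspace (Matrix.toEuclideanLin B) i.1) = ⊥))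
  let bas := fun i : { i : ℂ × ℂ // ¬ (Module.End.eigenspace (Matrix.toEuclideanLin A) i.2
      ⊓ Module.End.eigenspace (Matrix.toEuclideanLin B) i.1) = ⊥ } =>
    stdOrthonormalBasis ℂ (↥(Module.End.eigenspace (Matrix.toEuclideanLin A) i.1.2
      ⊓ Module.End.eigenspace (Matrix.toEuclideanLin B) i.1.1))
  let b0 := DirectSum.IsInternal.collectedOrthonormalBasis hOF hInt' bas
  have hmem := fun a => DirectSum.IsInternal.collectedOrthonormalBasis_mem hInt' hOF bas a
  have hcard : Fintype.card ((i : { i : ℂ × ℂ // ¬ (Module.End.eigenspace (Matrix.toEuclideanLin A) i.2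
      ⊓ Module.End.eigenspace (Matrix.toEuclideanLin B) i.1) = ⊥ }) ×
      Fin (finrank ℂ (↥(Module.End.eigenspace (Matrix.toEuclideanLin A) i.1.2
      ⊓ Module.End.eigenspace (Matrix.toEuclideanLin B) i.1.1)))) = n := by
    have := (Module.finrank_eq_card_basis b0.toBasis).symm
    rwa [finrank_euclideanSpace, Fintype.card_fin] at this
  let e := Fintype.equivOfCardEq (hcard.trans (Fintype.card_fin n).symm)
  let b := b0.reindex e
  let μ : Fin n → ℂ := fun k => (e.symm k).1.1.2 + Complex.I * (e.symm k).1.1.1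
  have heigen : ∀ k, Matrix.toEuclideanLin V (b k) = μ k • b k := by
    intro k
    have hm := hmem (e.symm k)
    have hmA : Matrix.toEuclideanLin A (b0 (e.symm k)) = (e.symm k).1.1.2 • b0 (e.symm k) :=
      Module.End.mem_eigenspace_iff.mp (Submodule.mem_inf.mp hm).1
    have hmB : Matrix.toEuclideanLin B (b0 (e.symm k)) = (e.symm k).1.1.1 • b0 (e.symm k) :=
      Module.End.mem_eigenspace_iff.mp (Submodule.mem_inf.mp hm).2
    have hb : b k = b0 (e.symm k) := b0.reindex_apply e k
    have hTV : Matrix.toEuclideanLin V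
        = Matrix.toEuclideanLin A + Complex.I • Matrix.toEuclideanLin B := by
      rw [hVAB]; simp only [map_add, _root_.map_smul]
    rw [hb, hTV, LinearMap.add_apply, LinearMap.smul_apply, hmA, hmB, smul_smul, ← add_smul]
  let W : Matrix (Fin n) (Fin n) ℂ := (EuclideanSpace.basisFun (Fin n) ℂ).toBasis.toMatrix b.toBasis
  have hWmem : W ∈ Matrix.unitaryGroup (Fin n) ℂ :=
    (EuclideanSpace.basisFun (Fin n) ℂ).toMatrix_orthonormalBasis_mem_unitary b
  have hWmul : ∀ j, W *ᵥ Pi.single j 1 = ⇑(b j) := by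
    intro j
    funext i
    simp only [Matrix.mulVec_single, mul_one, MulOpposite.op_one, one_smul]
    rfl
  have hVb : ∀ j, V *ᵥ ⇑(b j) = μ j • ⇑(b j) := by
    intro j
    simpa only [Matrix.toEuclideanLin_apply, WithLp.ofLp_smul] using congr(⇑$(heigen j))
  have h3 : W * star W = 1 := (Matrix.mem_unitaryGroup_iff).mp hWmem
  have h4 : star W * W = 1 := (Matrix.mem_unitaryGroup_iff').mp hWmem
  have hstarWb : ∀ j, (star W) *ᵥ ⇑(b j) = Pi.single j 1 := by
    intro j
    rw [← hWmul, Matrix.mulVec_mulVec, h4, Matrix.one_mulVec]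
  have hkey : star W * V * W = Matrix.diagonal μ := by
    apply Matrix.toEuclideanLin.injective
    apply Module.Basis.ext (EuclideanSpace.basisFun (Fin n) ℂ).toBasis
    intro j
    simp only [Matrix.toEuclideanLin_apply, OrthonormalBasis.coe_toBasis,
      EuclideanSpace.basisFun_apply, PiLp.ofLp_single, ← Matrix.mulVec_mulVec, hWmul, hVb,
      Matrix.diagonal_mulVec_single, Matrix.mulVec_smul, hstarWb, WithLp.ofLp_smul,
      PiLp.toLp_single, mul_one]
    apply PiLp.ext
    intro i
    simp only [PiLp.smul_apply, EuclideanSpace.single_apply, smul_eq_mul, mul_ite, mul_one,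
      mul_zero, Pi.single_apply, Pi.smul_apply]
  refine ⟨W, μ, hWmem, ?_⟩
  have : V = (W * star W) * V * (W * star W) := by rw [h3, one_mul, mul_one]
  rw [this, ← Matrix.star_eq_conjTranspose, ← hkey]
  noncomm_ring

end Aux

/-- Attaching an ancilla does not decrease the fidelity:
`|⟨Φ, ((U₁†U₂) ⊗ I) Φ⟩| ≥ F(U₁, U₂)` for every unit vector `Φ` of the joint system. -/
theorem fidelity_le_ancilla_overlap (n m : ℕ) (U₁ U₂ : Matrix (Fin n) (Fin n) ℂ)
    (hU₁ : U₁ ∈ Matrix.unitaryGroup (Fin n) ℂ) (hU₂ : U₂ ∈ Matrix.unitaryGroup (Fin n) ℂ)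
    (Φ : Fin n × Fin m → ℂ) (hΦ : star Φ ⬝ᵥ Φ = 1) :
    unitaryFidelity n U₁ U₂ ≤
      ‖star Φ ⬝ᵥ (((U₁ᴴ * U₂) ⊗ₖ (1 : Matrix (Fin m) (Fin m) ℂ)) *ᵥ Φ)‖ := by
  classical
  set V : Matrix (Fin n) (Fin n) ℂ := U₁ᴴ * U₂ with hVdef
  have hVu : V ∈ Matrix.unitaryGroup (Fin n) ℂ := by
    rw [hVdef, ← Matrix.star_eq_conjTranspose]
    exact mul_mem (Unitary.star_mem hU₁) hU₂
  obtain ⟨W, d, hWmem, hVWD⟩ := unitary_spectral n V hVu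
  have h3 : W * Wᴴ = 1 := by
    simpa [Matrix.star_eq_conjTranspose] using (Matrix.mem_unitaryGroup_iff).mp hWmem
  have h4 : Wᴴ * W = 1 := by
    simpa [Matrix.star_eq_conjTranspose] using (Matrix.mem_unitaryGroup_iff').mp hWmem
  -- kronecker facts
  have hKH : (Wᴴ ⊗ₖ (1 : Matrix (Fin m) (Fin m) ℂ))ᴴ = W ⊗ₖ (1 : Matrix (Fin m) (Fin m) ℂ) := by
    ext i j
    simp only [Matrix.conjTranspose_apply, Matrix.kroneckerMap_apply, star_mul',
      Matrix.one_apply, apply_ite, star_one, star_zero, star_star]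
    by_cases h : i.2 = j.2
    · simp [h]
    · simp only [if_neg h, mul_zero]
      rw [if_neg (fun hh : j.2 = i.2 => h hh.symm)]
  set Ψ : Fin n × Fin m → ℂ := (Wᴴ ⊗ₖ (1 : Matrix (Fin m) (Fin m) ℂ)) *ᵥ Φ with hΨdef
  have hΨstar : star Ψ = star Φ ᵥ* (W ⊗ₖ (1 : Matrix (Fin m) (Fin m) ℂ)) := by
    rw [hΨdef, Matrix.star_mulVec, hKH]
  set p : Fin n → ℝ := fun k => ∑ j, Complex.normSq (Ψ (k, j)) with hpdef
  have hp0 : ∀ k, 0 ≤ p k := fun k => Finset.sum_nonneg fun j _ => Complex.normSq_nonneg _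
  have hterm : ∀ x : Fin n × Fin m, star Ψ x * Ψ x = (Complex.normSq (Ψ x) : ℂ) := by
    intro x
    rw [Pi.star_apply, Complex.star_def, ← Complex.normSq_eq_conj_mul_self]
  have hΨΨ : star Ψ ⬝ᵥ Ψ = 1 := by
    rw [hΨstar, hΨdef, ← Matrix.dotProduct_mulVec, Matrix.mulVec_mulVec,
      ← Matrix.mul_kronecker_mul, h3, one_mul, Matrix.one_kronecker_one, Matrix.one_mulVec, hΦ]
  have hsum : (∑ k, (p k : ℂ)) = 1 := by
    rw [← hΨΨ, dotProduct, Fintype.sum_prod_type]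
    push_cast [hpdef]
    exact Finset.sum_congr rfl fun k _ => Finset.sum_congr rfl fun j _ => (hterm (k, j)).symm
  have hdiagK : (Matrix.diagonal d ⊗ₖ (1 : Matrix (Fin m) (Fin m) ℂ))
      = Matrix.diagonal (fun x : Fin n × Fin m => d x.1) := by
    rw [show (1 : Matrix (Fin m) (Fin m) ℂ) = Matrix.diagonal (fun _ => 1) from
      (Matrix.diagonal_one).symm, Matrix.diagonal_kronecker_diagonal]
    simp
  have E1 : star Φ ⬝ᵥ ((V ⊗ₖ (1 : Matrix (Fin m) (Fin m) ℂ)) *ᵥ Φ) = ∑ k, d k * (p k : ℂ) := by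
    have hsplit : (V ⊗ₖ (1 : Matrix (Fin m) (Fin m) ℂ))
        = (W ⊗ₖ (1 : Matrix (Fin m) (Fin m) ℂ)) *
          ((Matrix.diagonal d ⊗ₖ (1 : Matrix (Fin m) (Fin m) ℂ)) *
            (Wᴴ ⊗ₖ (1 : Matrix (Fin m) (Fin m) ℂ))) := by
      rw [← Matrix.mul_kronecker_mul, ← Matrix.mul_kronecker_mul, one_mul, one_mul, hVWD,
        mul_assoc]
    rw [hsplit, ← Matrix.mulVec_mulVec, Matrix.dotProduct_mulVec, ← hΨstar,
      ← Matrix.mulVec_mulVec, ← hΨdef, hdiagK]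
    rw [dotProduct, Fintype.sum_prod_type]
    push_cast [hpdef]
    refine Finset.sum_congr rfl fun k _ => ?_
    rw [Finset.mul_sum]
    refine Finset.sum_congr rfl fun j _ => ?_
    rw [Matrix.mulVec_diagonal]
    rw [show star Ψ (k, j) * (d (k, j).1 * Ψ (k, j))
      = d k * (star Ψ (k, j) * Ψ (k, j)) by ring, hterm]
  -- the witness vector
  set q : Fin n → ℂ := fun k => ((Real.sqrt (p k) : ℝ) : ℂ) with hqdef
  have hqq : ∀ k, star q k * q k = (p k : ℂ) := by
    intro k
    simp only [Pi.star_apply, hqdef, Complex.star_def, Complex.conj_ofReal]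
    rw [← Complex.ofReal_mul, Real.mul_self_sqrt (hp0 k)]
  set ψ : Fin n → ℂ := W *ᵥ q with hψdef
  have hψstar : star ψ ᵥ* W = star q := by
    rw [hψdef, Matrix.star_mulVec, Matrix.vecMul_vecMul, h4, Matrix.vecMul_one]
  have C1 : star ψ ⬝ᵥ ψ = 1 := by
    rw [hψdef, Matrix.dotProduct_mulVec, hψstar, ← hsum, dotProduct]
    exact Finset.sum_congr rfl fun k _ => hqq k
  have D1 : star ψ ⬝ᵥ (V *ᵥ ψ) = ∑ k, d k * (p k : ℂ) := by
    have hVW : V * W = W * Matrix.diagonal d := by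
      rw [hVWD, mul_assoc, mul_assoc, h4, mul_one]
    rw [hψdef, Matrix.mulVec_mulVec, hVW, ← Matrix.mulVec_mulVec,
      Matrix.dotProduct_mulVec, hψstar, dotProduct]
    refine Finset.sum_congr rfl fun k _ => ?_
    rw [Matrix.mulVec_diagonal]
    rw [show star q k * (d k * q k) = d k * (star q k * q k) by ring, hqq]
  -- conclude
  rw [unitaryFidelity]
  apply csInf_le
  · refine ⟨0, fun r hr => ?_⟩
    obtain ⟨ψ', -, rfl⟩ := hr
    exact norm_nonneg _
  · exact ⟨ψ, C1, congrArg norm (E1.trans D1.symm)⟩
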